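/- Let ‖w(t)‖ and φ(t) solve d/dt ‖w‖ = -(1/2)‖w‖ + (1/2)‖w*‖(sin φ - φ cos φ)/π, dφ/dt = (1/2)(‖w*‖/‖w‖)(φ sin φ)/π, with φ(0) = φ_0 ∈ (0, π). Define ε_0 = 1 - (sin φ_0 - φ_0 cos φ_0)/π > 0. Then for all t > 0, (1-ε_0)(1-e^{-t/2})‖w*‖ + ‖w(0)‖e^{-t/2} < ‖w(t)‖ < (1-e^{-t/2})‖w*‖ + ‖w(0)‖e^{-t/2}. -/

import Mathlib

open Real Filter

lemma relu_g_strictMonoOn : StrictMonoOn (fun x => Real.sin x - x * Real.cos x) (Set.Icc 0 π) := by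
  apply strictMonoOn_of_hasDerivWithinAt_pos (f' := fun x => x * Real.sin x) (convex_Icc _ _)
  · exact (Real.continuous_sin.sub (continuous_id.mul Real.continuous_cos)).continuousOn
  · intro x hx
    have h := (Real.hasDerivAt_sin x).sub ((hasDerivAt_id x).mul (Real.hasDerivAt_cos x))
    have h2 : Real.cos x - (1 * Real.cos x + id x * -Real.sin x) = x * Real.sin x := by
      simp only [id_eq, one_mul, mul_neg]; ring
    rw [h2] at h
    exact h.hasDerivWithinAt
  · intro x hx
    rw [interior_Icc] at hx
    exact mul_pos hx.1 (Real.sin_pos_of_pos_of_lt_pi hx.1 hx.2)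

/-- Magnitude bounds for the one-layer single ReLU neuron gradient flow:
`(1-ε₀)(1-e^{-t/2})‖w*‖ + ‖w(0)‖e^{-t/2} < ‖w(t)‖ < (1-e^{-t/2})‖w*‖ + ‖w(0)‖e^{-t/2}`. -/
theorem one_layer_magnitude_bounds
    (a : ℝ) (ha : 0 < a) (W φ : ℝ → ℝ)
    (hWpos : ∀ t, 0 < W t)
    (hW : ∀ t, HasDerivAt W
      (-(1/2) * W t + (1/2) * a * (Real.sin (φ t) - φ t * Real.cos (φ t)) / π) t)
    (hφ : ∀ t, HasDerivAt φ ((1/2) * (a / W t) * (φ t * Real.sin (φ t)) / π) t)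
    (h0 : 0 < φ 0 ∧ φ 0 < π)
    (ε0 : ℝ) (hε0 : ε0 = 1 - (Real.sin (φ 0) - φ 0 * Real.cos (φ 0)) / π) :
    ∀ t > 0,
      (1 - ε0) * (1 - Real.exp (-t/2)) * a + W 0 * Real.exp (-t/2) < W t ∧
      W t < (1 - Real.exp (-t/2)) * a + W 0 * Real.exp (-t/2) := by
  have hπ : (0:ℝ) < π := Real.pi_pos
  have hφc : Continuous φ := by
    rw [continuous_iff_continuousAt]; exact fun t => (hφ t).continuousAt
  have hWc : Continuous W := by
    rw [continuous_iff_continuousAt]; exact fun t => (hW t).continuousAt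
  -- Step A: φ stays in (0, π) for t ≥ 0
  have hmem : ∀ t, 0 ≤ t → φ t ∈ Set.Ioo 0 π := by
    intro T hT
    by_contra hc
    set S : Set ℝ := Set.Icc 0 T ∩ φ ⁻¹' (Set.Ioo 0 π)ᶜ with hS
    have hScl : IsClosed S := isClosed_Icc.inter (isOpen_Ioo.preimage hφc).isClosed_compl
    have hTS : T ∈ S := by
      rw [hS]
      exact Set.mem_inter ⟨hT, le_refl T⟩ hc
    have hSne : S.Nonempty := ⟨T, hTS⟩
    have hSbd : BddBelow S := ⟨0, fun x hx => hx.1.1⟩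
    set t₁ := sInf S with ht₁
    have ht₁S : t₁ ∈ S := hScl.csInf_mem hSne hSbd
    have ht₁0 : 0 < t₁ := by
      rcases lt_or_eq_of_le ht₁S.1.1 with h | h
      · exact h
      · exfalso
        rw [← h] at ht₁S
        exact ht₁S.2 ⟨h0.1, h0.2⟩
    have hbefore : ∀ s, s ∈ Set.Ico 0 t₁ → φ s ∈ Set.Ioo 0 π := by
      intro s hs
      by_contra hns
      exact absurd (csInf_le hSbd ⟨⟨hs.1, hs.2.le.trans ht₁S.1.2⟩, hns⟩) (not_le.mpr hs.2)
    -- φ t₁ ∈ [0, π]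
    have hlim : Filter.Tendsto φ (nhdsWithin t₁ (Set.Iio t₁)) (nhds (φ t₁)) :=
      (hφc.continuousAt).tendsto.mono_left nhdsWithin_le_nhds
    have hev : ∀ᶠ s in nhdsWithin t₁ (Set.Iio t₁), φ s ∈ Set.Icc 0 π := by
      filter_upwards [Ioo_mem_nhdsLT ht₁0] with s hs
      exact Set.mem_Icc.mpr ⟨(hbefore s ⟨hs.1.le, hs.2⟩).1.le, (hbefore s ⟨hs.1.le, hs.2⟩).2.le⟩
    have hmemIcc : φ t₁ ∈ Set.Icc 0 π := isClosed_Icc.mem_of_tendsto hlim hev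
    have hcases : φ t₁ = 0 ∨ φ t₁ = π := by
      rcases lt_or_eq_of_le hmemIcc.1 with h1 | h1
      · rcases lt_or_eq_of_le hmemIcc.2 with h2 | h2
        · exact absurd ⟨h1, h2⟩ ht₁S.2
        · exact Or.inr h2
      · exact Or.inl h1.symm
    rcases hcases with hc0 | hcπ
    · -- φ monotone on [0,t₁], so φ t₁ ≥ φ 0 > 0
      have hmono : MonotoneOn φ (Set.Icc 0 t₁) := by
        apply monotoneOn_of_hasDerivWithinAt_nonneg (convex_Icc _ _) hφc.continuousOn
          (f' := fun s => (1/2) * (a / W s) * (φ s * Real.sin (φ s)) / π)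
        · exact fun x _ => (hφ x).hasDerivWithinAt
        · intro x hx
          rw [interior_Icc] at hx
          have hφx := hbefore x ⟨hx.1.le, hx.2⟩
          have hX : 0 ≤ φ x * Real.sin (φ x) :=
            le_of_lt (mul_pos hφx.1 (Real.sin_pos_of_pos_of_lt_pi hφx.1 hφx.2))
          have h12 : (0:ℝ) ≤ (1/2) * (a / W x) :=
            mul_nonneg (by norm_num) (div_nonneg ha.le (hWpos x).le)
          exact div_nonneg (mul_nonneg h12 hX) hπ.le
      have := hmono (Set.left_mem_Icc.mpr ht₁0.le) (Set.right_mem_Icc.mpr ht₁0.le) ht₁0.le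
      rw [hc0] at this
      linarith [h0.1]
    · -- Gronwall barrier at π
      obtain ⟨s₀, hs₀mem, hs₀min⟩ := isCompact_Icc.exists_isMinOn (Set.nonempty_Icc.mpr ht₁0.le)
        (hWc.continuousOn : ContinuousOn W (Set.Icc 0 t₁))
      set m := W s₀ with hm
      have hm0 : 0 < m := hWpos s₀
      set C := a / (2 * m) with hC
      have hC0 : 0 < C := div_pos ha (by linarith)
      set F : ℝ → ℝ := fun s => Real.exp (C * s) * (π - φ s) with hF
      have hFd : ∀ s, HasDerivAt F
          (Real.exp (C * s) * (C * 1) * (π - φ s)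
            + Real.exp (C * s) * (0 - (1/2) * (a / W s) * (φ s * Real.sin (φ s)) / π)) s := by
        intro s
        exact (((hasDerivAt_id s).const_mul C).exp).mul ((hasDerivAt_const s π).sub (hφ s))
      have hmono : MonotoneOn F (Set.Icc 0 t₁) := by
        apply monotoneOn_of_hasDerivWithinAt_nonneg (convex_Icc _ _)
          ((Real.continuous_exp.comp (continuous_const.mul continuous_id)).mul
            (continuous_const.sub hφc)).continuousOn
          (f' := fun s => Real.exp (C * s) * (C * 1) * (π - φ s)
            + Real.exp (C * s) * (0 - (1/2) * (a / W s) * (φ s * Real.sin (φ s)) / π))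
        · exact fun x _ => (hFd x).hasDerivWithinAt
        · intro x hx
          rw [interior_Icc] at hx
          have hφx := hbefore x ⟨hx.1.le, hx.2⟩
          have hWx : m ≤ W x := hs₀min ⟨hx.1.le, hx.2.le⟩
          have hsin : Real.sin (φ x) ≤ π - φ x := by
            rw [← Real.sin_pi_sub]
            exact Real.sin_le (by linarith [hφx.2])
          have hsin0 : 0 ≤ Real.sin (φ x) :=
            (Real.sin_pos_of_pos_of_lt_pi hφx.1 hφx.2).le
          have hX : 0 ≤ φ x * Real.sin (φ x) := mul_nonneg hφx.1.le hsin0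
          have hXle : φ x * Real.sin (φ x) ≤ π * (π - φ x) :=
            mul_le_mul hφx.2.le hsin hsin0 hπ.le
          have ham : (0:ℝ) ≤ a / m := div_nonneg ha.le hm0.le
          have hkey : (1/2) * (a / W x) * (φ x * Real.sin (φ x)) / π
              ≤ (1/2) * (a / m) * (π * (π - φ x)) / π := by
            calc (1/2) * (a / W x) * (φ x * Real.sin (φ x)) / π
                ≤ (1/2) * (a / m) * (φ x * Real.sin (φ x)) / π := by gcongr
              _ ≤ (1/2) * (a / m) * (π * (π - φ x)) / π := by gcongr
          have heq : (1/2) * (a / m) * (π * (π - φ x)) / π = C * (π - φ x) := by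
            rw [hC]
            field_simp
          have hE : 0 < Real.exp (C * x) := Real.exp_pos _
          rw [heq] at hkey
          nlinarith [hkey, hE]
      have h1 := hmono (Set.left_mem_Icc.mpr ht₁0.le) (Set.right_mem_Icc.mpr ht₁0.le) ht₁0.le
      have hF0 : F 0 = π - φ 0 := by simp [hF]
      have hFt : F t₁ = 0 := by simp [hF, hcπ]
      rw [hF0, hFt] at h1
      linarith [h0.2]
  -- Step B: φ strictly increasing beyond 0
  have hφmono : ∀ t, 0 < t → φ 0 < φ t := by
    intro t ht
    have : StrictMonoOn φ (Set.Icc 0 t) := by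
      apply strictMonoOn_of_hasDerivWithinAt_pos (convex_Icc _ _) hφc.continuousOn
        (f' := fun s => (1/2) * (a / W s) * (φ s * Real.sin (φ s)) / π)
      · exact fun x _ => (hφ x).hasDerivWithinAt
      · intro x hx
        rw [interior_Icc] at hx
        have hφx := hmem x hx.1.le
        have h1 : 0 < φ x * Real.sin (φ x) :=
          mul_pos hφx.1 (Real.sin_pos_of_pos_of_lt_pi hφx.1 hφx.2)
        have h2 : 0 < W x := hWpos x
        positivity
    exact this (Set.left_mem_Icc.mpr ht.le) (Set.right_mem_Icc.mpr ht.le) ht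
  -- g values
  set g : ℝ → ℝ := fun x => Real.sin x - x * Real.cos x with hg
  have hgπ : g π = π := by simp [hg]
  have hgin : ∀ t, 0 ≤ t → g (φ t) < π := by
    intro t ht
    have hφt := hmem t ht
    have h2 : g (φ t) < g π := relu_g_strictMonoOn (Set.mem_Icc.mpr ⟨hφt.1.le, hφt.2.le⟩)
      (Set.mem_Icc.mpr ⟨hπ.le, le_refl π⟩) hφt.2
    rwa [hgπ] at h2
  have hglow : ∀ t, 0 < t → g (φ 0) < g (φ t) := by
    intro t ht
    have hφ0 := hmem 0 (le_refl 0)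
    have hφt := hmem t ht.le
    exact relu_g_strictMonoOn (Set.mem_Icc.mpr ⟨hφ0.1.le, hφ0.2.le⟩)
      (Set.mem_Icc.mpr ⟨hφt.1.le, hφt.2.le⟩) (hφmono t ht)
  have hε0' : 1 - ε0 = g (φ 0) / π := by rw [hε0]; ring
  intro t ht
  have hE : Real.exp (-t/2) * Real.exp (t/2) = 1 := by
    rw [← Real.exp_add, show -t/2 + t/2 = 0 by ring, Real.exp_zero]
  have hEp : 0 < Real.exp (-t/2) := Real.exp_pos _
  have hexp_half : ∀ s : ℝ, HasDerivAt (fun u => Real.exp (u/2)) (Real.exp (s/2) * (1/2)) s := by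
    intro s
    have : HasDerivAt (fun u : ℝ => u/2) (1/2) s := by
      simpa using (hasDerivAt_id s).div_const 2
    exact this.exp
  constructor
  · -- lower bound
    set D : ℝ → ℝ := fun s => Real.exp (s/2) * W s - (1 - ε0) * a * Real.exp (s/2) with hD
    have hDd : ∀ s, HasDerivAt D
        (Real.exp (s/2) * (1/2) * W s
          + Real.exp (s/2) * (-(1/2) * W s + (1/2) * a * g (φ s) / π)
          - (1 - ε0) * a * (Real.exp (s/2) * (1/2))) s := by
      intro s
      exact ((hexp_half s).mul (hW s)).sub ((hexp_half s).const_mul ((1 - ε0) * a))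
    have hmonoD : StrictMonoOn D (Set.Icc 0 t) := by
      apply strictMonoOn_of_hasDerivWithinAt_pos (convex_Icc _ _)
        (((Real.continuous_exp.comp (continuous_id.div_const 2)).mul hWc).sub
          (continuous_const.mul (Real.continuous_exp.comp (continuous_id.div_const 2)))).continuousOn
        (f' := fun s => Real.exp (s/2) * (1/2) * W s
          + Real.exp (s/2) * (-(1/2) * W s + (1/2) * a * g (φ s) / π)
          - (1 - ε0) * a * (Real.exp (s/2) * (1/2)))
      · exact fun x _ => (hDd x).hasDerivWithinAt
      · intro x hx
        rw [interior_Icc] at hx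
        have hgl : g (φ 0) < g (φ x) := hglow x hx.1
        have hEx : 0 < Real.exp (x/2) := Real.exp_pos _
        have heq : Real.exp (x/2) * (1/2) * W x
            + Real.exp (x/2) * (-(1/2) * W x + (1/2) * a * g (φ x) / π)
            - (1 - ε0) * a * (Real.exp (x/2) * (1/2))
            = Real.exp (x/2) * (a / (2*π)) * (g (φ x) - g (φ 0)) := by
          rw [hε0']
          field_simp
          ring
        rw [heq]
        exact mul_pos (mul_pos (Real.exp_pos _) (div_pos ha (by positivity)))
          (by linarith)
    have h1 := hmonoD (Set.left_mem_Icc.mpr ht.le) (Set.right_mem_Icc.mpr ht.le) ht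
    have hD0 : D 0 = W 0 - (1 - ε0) * a := by simp [hD]
    rw [hD0] at h1
    simp only [hD] at h1
    have key := mul_lt_mul_of_pos_left h1 hEp
    have h2 : Real.exp (-t/2) * (Real.exp (t/2) * W t - (1 - ε0) * a * Real.exp (t/2))
        = W t - (1 - ε0) * a := by
      linear_combination (W t - (1 - ε0) * a) * hE
    rw [h2] at key
    nlinarith [key]
  · -- upper bound
    set U : ℝ → ℝ := fun s => a * Real.exp (s/2) - Real.exp (s/2) * W s with hU
    have hUd : ∀ s, HasDerivAt U
        (a * (Real.exp (s/2) * (1/2))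
          - (Real.exp (s/2) * (1/2) * W s
            + Real.exp (s/2) * (-(1/2) * W s + (1/2) * a * g (φ s) / π))) s := by
      intro s
      exact ((hexp_half s).const_mul a).sub ((hexp_half s).mul (hW s))
    have hmonoU : StrictMonoOn U (Set.Icc 0 t) := by
      apply strictMonoOn_of_hasDerivWithinAt_pos (convex_Icc _ _)
        ((continuous_const.mul (Real.continuous_exp.comp (continuous_id.div_const 2))).sub
          ((Real.continuous_exp.comp (continuous_id.div_const 2)).mul hWc)).continuousOn
        (f' := fun s => a * (Real.exp (s/2) * (1/2))
          - (Real.exp (s/2) * (1/2) * W s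
            + Real.exp (s/2) * (-(1/2) * W s + (1/2) * a * g (φ s) / π)))
      · exact fun x _ => (hUd x).hasDerivWithinAt
      · intro x hx
        rw [interior_Icc] at hx
        have hgu : g (φ x) < π := hgin x hx.1.le
        have hEx : 0 < Real.exp (x/2) := Real.exp_pos _
        have heq : a * (Real.exp (x/2) * (1/2))
            - (Real.exp (x/2) * (1/2) * W x
              + Real.exp (x/2) * (-(1/2) * W x + (1/2) * a * g (φ x) / π))
            = Real.exp (x/2) * (a / (2*π)) * (π - g (φ x)) := by
          field_simp
          ring
        rw [heq]
        exact mul_pos (mul_pos (Real.exp_pos _) (div_pos ha (by positivity)))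
          (by linarith)
    have h1 := hmonoU (Set.left_mem_Icc.mpr ht.le) (Set.right_mem_Icc.mpr ht.le) ht
    have hU0 : U 0 = a - W 0 := by simp [hU]
    rw [hU0] at h1
    simp only [hU] at h1
    have key := mul_lt_mul_of_pos_left h1 hEp
    have h2 : Real.exp (-t/2) * (a * Real.exp (t/2) - Real.exp (t/2) * W t)
        = a - W t := by
      linear_combination (a - W t) * hE
    rw [h2] at key
    nlinarith [key]
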